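/- arXiv:1909.12175 — 2 statements merged into one kernel-verified Lean document; each statement's English description precedes it below -/
import Mathlib

section
/- The dual of the Fano matroid, F_7*, is not 3-entropic: there is no vector X = (X_1,…,X_7) of F_3-valued random variables whose base-3 Shannon entropy function coincides with the rank function of F_7*. -/
open scoped Classical BigOperators

/-- Shannon entropy in base `q` of a probability mass function on a finite type. -/
noncomputable def shannonEntropy {α : Type*} [Fintype α] (q : ℝ) (μ : PMF α) : ℝ :=
  -∑ x : α, (μ x).toReal * Real.logb q (μ x).toReal

/-- Marginal of a distribution on `ι → α` on the coordinates in `S`. -/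
noncomputable def marg {ι α : Type*} (μ : PMF (ι → α)) (S : Finset ι) :
    PMF ({ i // i ∈ S } → α) :=
  μ.map fun x i => x i.1

/-- The seven nonzero vectors of `F_2^3`, representing the Fano matroid `F_7`. -/
def fanoVec : Fin 7 → (Fin 3 → ZMod 2) :=
  ![![1,0,0], ![0,1,0], ![0,0,1], ![1,1,0], ![1,0,1], ![0,1,1], ![1,1,1]]

/-- The rank function of the Fano matroid, via its `F_2`-representation. -/
noncomputable def fanoRank (S : Finset (Fin 7)) : ℕ :=
  Module.finrank (ZMod 2) (Submodule.span (ZMod 2) (fanoVec '' (S : Set (Fin 7))))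



/-- Finite sum of PMF values (as reals) is 1. -/
lemma pmf_sum_toReal {α : Type*} [Fintype α] (p : PMF α) :
    ∑ a : α, (p a).toReal = 1 := by
  have h := p.tsum_coe
  rw [tsum_fintype] at h
  have := ENNReal.toReal_sum (s := Finset.univ) (f := fun a => p a)
    (fun a _ => p.apply_ne_top a)
  rw [h] at this
  simpa using this.symm

/-- If the base-3 entropy equals `logb 3 (card α)` then the PMF has full support. -/
lemma full_support_of_entropy_eq_log_card {α : Type*} [Fintype α] (p : PMF α)
    (hn : 0 < Fintype.card α)
    (hH : shannonEntropy 3 p = Real.logb 3 (Fintype.card α)) :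
    ∀ a, p a ≠ 0 := by
  set n : ℕ := Fintype.card α with hn_def
  set r : α → ℝ := fun a => (p a).toReal with hr_def
  have hr0 : ∀ a, 0 ≤ r a := fun a => ENNReal.toReal_nonneg
  have hsum : ∑ a, r a = 1 := pmf_sum_toReal p
  have hlog3 : Real.log 3 ≠ 0 := ne_of_gt (Real.log_pos (by norm_num))
  have hnR : (0:ℝ) < n := by exact_mod_cast hn
  -- each term of S is nonneg
  have hterm : ∀ a, 0 ≤ 1/(n:ℝ) - r a + r a * Real.log (n * r a) := by
    intro a
    rcases eq_or_lt_of_le (hr0 a) with h|h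
    · rw [← h]; simp
    · have hnr : (0:ℝ) < n * r a := by positivity
      have h1 := Real.log_le_sub_one_of_pos (x := (n * r a)⁻¹) (by positivity)
      rw [Real.log_inv] at h1
      -- -log(nr) ≤ (nr)⁻¹ - 1  ⇒  log (nr) ≥ 1 - (nr)⁻¹
      have h2 : 1 - (↑n * r a)⁻¹ ≤ Real.log (n * r a) := by linarith
      have h3 : r a * (1 - (↑n * r a)⁻¹) ≤ r a * Real.log (n * r a) :=
        mul_le_mul_of_nonneg_left h2 (hr0 a)
      have h4 : r a * (1 - (↑n * r a)⁻¹) = r a - 1/(n:ℝ) := by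
        field_simp
      linarith
  -- the sum of the terms is 0
  have hpt : ∀ a, r a * Real.log (n * r a) = r a * Real.log n + r a * Real.log (r a) := by
    intro a
    rcases eq_or_lt_of_le (hr0 a) with h|h
    · rw [← h]; ring
    · rw [Real.log_mul (ne_of_gt hnR) (ne_of_gt h)]; ring
  have hent : ∑ a, r a * Real.log (r a) = - Real.log n := by
    have h1 : shannonEntropy 3 p = -∑ a, r a * (Real.log (r a) / Real.log 3) := by
      simp only [shannonEntropy, Real.logb]; rfl
    rw [h1, Real.logb] at hH
    have h2 : ∑ a, r a * (Real.log (r a) / Real.log 3)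
        = (∑ a, r a * Real.log (r a)) / Real.log 3 := by
      rw [Finset.sum_div]; apply Finset.sum_congr rfl; intro a _; ring
    rw [h2] at hH
    field_simp at hH
    have h3 : (-∑ a, r a * Real.log (r a)) * Real.log 3 = Real.log n * Real.log 3 := by
      rw [hH]
    have h4 := mul_right_cancel₀ hlog3 h3
    linarith
  have hS : ∑ a, (1/(n:ℝ) - r a + r a * Real.log (n * r a)) = 0 := by
    rw [Finset.sum_add_distrib, Finset.sum_sub_distrib]
    have e1 : ∑ _a : α, 1/(n:ℝ) = 1 := by
      rw [Finset.sum_const]; simp [hn_def]; exact div_self (ne_of_gt hnR)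
    have e2 : ∑ a, r a * Real.log (n * r a) = 0 := by
      rw [Finset.sum_congr rfl (fun a _ => hpt a), Finset.sum_add_distrib,
        ← Finset.sum_mul, hsum, hent]; ring
    rw [e1, hsum, e2]; ring
  have hz : ∀ a ∈ Finset.univ, (1/(n:ℝ) - r a + r a * Real.log (n * r a)) = 0 :=
    (Finset.sum_eq_zero_iff_of_nonneg (fun a _ => hterm a)).mp hS
  intro a hpa
  have hra : r a = 0 := by simp [hr_def, hpa]
  have := hz a (Finset.mem_univ a)
  rw [hra] at this
  simp at this
  rw [this] at hnR
  simp at hnR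


lemma pmf_map_toReal {α β : Type*} [Fintype α] (p : PMF α) (f : α → β) (b : β) :
    ((p.map f) b).toReal = ∑ a, if b = f a then (p a).toReal else 0 := by
  rw [PMF.map_apply, tsum_fintype,
    ENNReal.toReal_sum (fun a _ => by split <;> simp [p.apply_ne_top a])]
  apply Finset.sum_congr rfl
  intro a _
  split <;> simp

/-- Equality of entropies under a pushforward forces injectivity on the support. -/
lemma inj_on_support_of_entropy_map_eq {α β : Type*} [Fintype α] [Fintype β]
    (p : PMF α) (f : α → β)
    (hH : shannonEntropy 3 (p.map f) = shannonEntropy 3 p) :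
    ∀ a a', p a ≠ 0 → p a' ≠ 0 → f a = f a' → a = a' := by
  set r : α → ℝ := fun a => (p a).toReal with hr_def
  set s : β → ℝ := fun b => ((p.map f) b).toReal with hs_def
  have hr0 : ∀ a, 0 ≤ r a := fun a => ENNReal.toReal_nonneg
  have hs0 : ∀ b, 0 ≤ s b := fun b => ENNReal.toReal_nonneg
  have hs : ∀ b, s b = ∑ a, if b = f a then r a else 0 := fun b => pmf_map_toReal p f b
  have hrs : ∀ a, r a ≤ s (f a) := by
    intro a
    rw [hs (f a)]
    have := Finset.single_le_sum (f := fun a' => if f a = f a' then r a' else 0)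
      (fun a' _ => by split <;> simp [hr0]) (Finset.mem_univ a)
    simpa using this
  have key : ∑ b, s b * Real.logb 3 (s b) = ∑ a, r a * Real.logb 3 (s (f a)) := by
    have h1 : ∀ b, s b * Real.logb 3 (s b)
        = ∑ a, if b = f a then r a * Real.logb 3 (s b) else 0 := by
      intro b
      rw [hs b, Finset.sum_mul]
      apply Finset.sum_congr rfl
      intro a _
      split <;> simp
    rw [Finset.sum_congr rfl (fun b _ => h1 b), Finset.sum_comm]
    apply Finset.sum_congr rfl
    intro a _
    have : ∑ b, (if b = f a then r a * Real.logb 3 (s b) else 0)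
        = r a * Real.logb 3 (s (f a)) := by
      rw [Finset.sum_ite_eq' Finset.univ (f a) (fun b => r a * Real.logb 3 (s b))]
      simp
    exact this
  have hterm : ∀ a, 0 ≤ r a * (Real.logb 3 (s (f a)) - Real.logb 3 (r a)) := by
    intro a
    rcases eq_or_lt_of_le (hr0 a) with h|h
    · rw [← h]; simp
    · apply mul_nonneg (le_of_lt h)
      rw [sub_nonneg]
      exact Real.logb_le_logb_of_le (by norm_num) h (hrs a)
  have hsum0 : ∑ a, r a * (Real.logb 3 (s (f a)) - Real.logb 3 (r a)) = 0 := by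
    have hq : shannonEntropy 3 (p.map f) = -∑ a, r a * Real.logb 3 (s (f a)) := by
      rw [shannonEntropy, key]
    have hp : shannonEntropy 3 p = -∑ a, r a * Real.logb 3 (r a) := rfl
    have : ∑ a, r a * (Real.logb 3 (s (f a)) - Real.logb 3 (r a))
        = (∑ a, r a * Real.logb 3 (s (f a))) - ∑ a, r a * Real.logb 3 (r a) := by
      rw [← Finset.sum_sub_distrib]
      apply Finset.sum_congr rfl; intro a _; ring
    rw [this]
    rw [hq, hp] at hH
    linarith
  have hz := (Finset.sum_eq_zero_iff_of_nonneg (fun a _ => hterm a)).mp hsum0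
  intro a a' ha ha' hf
  by_contra hne
  have hra : 0 < r a := lt_of_le_of_ne (hr0 a) (by
    simp only [hr_def]; intro h
    exact ha ((ENNReal.toReal_eq_zero_iff _).mp h.symm |>.resolve_right (p.apply_ne_top a)))
  have hra' : 0 < r a' := lt_of_le_of_ne (hr0 a') (by
    simp only [hr_def]; intro h
    exact ha' ((ENNReal.toReal_eq_zero_iff _).mp h.symm |>.resolve_right (p.apply_ne_top a')))
  have hseq : s (f a) = r a := by
    have h0 := hz a (Finset.mem_univ a)
    have hlog : Real.logb 3 (s (f a)) = Real.logb 3 (r a) := by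
      rcases mul_eq_zero.mp h0 with h|h
      · exact absurd h (ne_of_gt hra)
      · linarith [sub_eq_zero.mp h]
    have hs_pos : 0 < s (f a) := lt_of_lt_of_le hra (hrs a)
    exact Real.logb_injOn_pos (by norm_num : (1:ℝ) < 3)
      (Set.mem_Ioi.mpr hs_pos) (Set.mem_Ioi.mpr hra) hlog
  have hsge : r a + r a' ≤ s (f a) := by
    rw [hs (f a)]
    have hsub : ({a, a'} : Finset α) ⊆ Finset.univ := Finset.subset_univ _
    have := Finset.sum_le_sum_of_subset_of_nonneg hsub
      (f := fun a'' => if f a = f a'' then r a'' else 0)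
      (fun a'' _ _ => by split <;> simp [hr0])
    rw [Finset.sum_pair hne] at this
    simpa [hf] using this
  linarith

lemma inj_affine : ∀ c : ZMod 3 → ZMod 3, Function.Injective c →
    ∀ z, c z = c 0 + (c 1 - c 0) * z := by decide

lemma sum_inj3 : ∀ c : ZMod 3 → ZMod 3, Function.Injective c →
    c 0 + c 1 + c 2 = 0 := by decide

lemma three_ne : ∀ u v w : ZMod 3, u ≠ 0 → v ≠ 0 → w ≠ 0 → u + v + w = 0 →
    u = v ∧ v = w := by decide

lemma zmod3_cases : ∀ z : ZMod 3, z = 0 ∨ z = 1 ∨ z = 2 := by decide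

lemma sq_one : ∀ u : ZMod 3, u ≠ 0 → u * u = 1 := by decide

lemma zmod3_one_ne_zero : (1 : ZMod 3) ≠ 0 := by decide

lemma final_contra : ∀ a1 a2 a3 b0 b2 b3 c0 c1 c2 : ZMod 3,
    a1 ≠ 0 → a2 ≠ 0 → a3 ≠ 0 → b0 ≠ 0 → b2 ≠ 0 → b3 ≠ 0 → c0 ≠ 0 → c1 ≠ 0 → c2 ≠ 0 →
    b2 * a3 = b3 * a2 → c1 * a2 = c2 * a1 → c0 * b2 = c2 * b0 →
    c0 * (b0 * b3) + c1 * (a1 * a3) ≠ 0 := by decide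

lemma square_affine (L : ZMod 3 → ZMod 3 → ZMod 3)
    (hx : ∀ y, Function.Injective (fun x => L x y))
    (hy : ∀ x, Function.Injective (L x)) :
    ∀ x y, L x y = L 0 0 + (L 1 0 - L 0 0) * x + (L 0 1 - L 0 0) * y := by
  have h1 : ∀ y x, L x y = L 0 y + (L 1 y - L 0 y) * x := fun y x =>
    inj_affine (fun x => L x y) (hx y) x
  have h2 : ∀ y, L 0 y = L 0 0 + (L 0 1 - L 0 0) * y := fun y =>
    inj_affine (L 0) (hy 0) y
  have hd : ∀ y, L 1 y - L 0 y = L 1 0 - L 0 0 := by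
    have s1 := sum_inj3 (L 1) (hy 1)
    have s0 := sum_inj3 (L 0) (hy 0)
    have hne : ∀ y, L 1 y - L 0 y ≠ 0 := fun y h =>
      zmod3_one_ne_zero (hx y (sub_eq_zero.mp h))
    have hsum : (L 1 0 - L 0 0) + (L 1 1 - L 0 1) + (L 1 2 - L 0 2) = 0 := by
      linear_combination s1 - s0
    obtain ⟨e1, e2⟩ := three_ne _ _ _ (hne 0) (hne 1) (hne 2) hsum
    intro y
    rcases zmod3_cases y with h|h|h <;> subst h
    · rfl
    · exact e1.symm
    · exact (e1.trans e2).symm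
  intro x y
  have h := h1 y x
  rw [hd y, h2 y] at h
  linear_combination h

lemma cube_affine (f : ZMod 3 → ZMod 3 → ZMod 3 → ZMod 3)
    (h1 : ∀ y z, Function.Injective (fun x => f x y z))
    (h2 : ∀ x z, Function.Injective (fun y => f x y z))
    (h3 : ∀ x y, Function.Injective (f x y)) :
    ∀ x y z, f x y z = f 0 0 0 + (f 1 0 0 - f 0 0 0) * x + (f 0 1 0 - f 0 0 0) * y
      + (f 0 0 1 - f 0 0 0) * z := by
  have hsq : ∀ z x y, f x y z = f 0 0 z + (f 1 0 z - f 0 0 z) * x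
      + (f 0 1 z - f 0 0 z) * y := fun z =>
    square_affine (fun x y => f x y z) (fun y => h1 y z) (fun x => h2 x z)
  have hc : ∀ z, f 0 0 z = f 0 0 0 + (f 0 0 1 - f 0 0 0) * z :=
    inj_affine (f 0 0) (h3 0 0)
  have ha : ∀ z, f 1 0 z - f 0 0 z = f 1 0 0 - f 0 0 0 := by
    have s1 := sum_inj3 (f 1 0) (h3 1 0)
    have s0 := sum_inj3 (f 0 0) (h3 0 0)
    have hne : ∀ z, f 1 0 z - f 0 0 z ≠ 0 := fun z h =>
      zmod3_one_ne_zero (h1 0 z (sub_eq_zero.mp h))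
    have hsum : (f 1 0 0 - f 0 0 0) + (f 1 0 1 - f 0 0 1) + (f 1 0 2 - f 0 0 2) = 0 := by
      linear_combination s1 - s0
    obtain ⟨e1, e2⟩ := three_ne _ _ _ (hne 0) (hne 1) (hne 2) hsum
    intro z
    rcases zmod3_cases z with h|h|h <;> subst h
    · rfl
    · exact e1.symm
    · exact (e1.trans e2).symm
  have hb : ∀ z, f 0 1 z - f 0 0 z = f 0 1 0 - f 0 0 0 := by
    have s1 := sum_inj3 (f 0 1) (h3 0 1)
    have s0 := sum_inj3 (f 0 0) (h3 0 0)
    have hne : ∀ z, f 0 1 z - f 0 0 z ≠ 0 := fun z h =>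
      zmod3_one_ne_zero (h2 0 z (sub_eq_zero.mp h))
    have hsum : (f 0 1 0 - f 0 0 0) + (f 0 1 1 - f 0 0 1) + (f 0 1 2 - f 0 0 2) = 0 := by
      linear_combination s1 - s0
    obtain ⟨e1, e2⟩ := three_ne _ _ _ (hne 0) (hne 1) (hne 2) hsum
    intro z
    rcases zmod3_cases z with h|h|h <;> subst h
    · rfl
    · exact e1.symm
    · exact (e1.trans e2).symm
  intro x y z
  have h := hsq z x y
  rw [ha z, hb z, hc z] at h
  linear_combination h



lemma rank_empty : fanoRank ∅ = 0 := by
  have h : fanoVec '' ((∅ : Finset (Fin 7)) : Set (Fin 7)) = ∅ := by simp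
  rw [fanoRank, h, Submodule.span_empty]
  exact finrank_bot _ _

lemma rank_three (S : Finset (Fin 7)) (i j k : Fin 7)
    (hi : i ∈ S) (hj : j ∈ S) (hk : k ∈ S)
    (hsp : ∀ x : Fin 3 → ZMod 2,
      ∃ a b c : ZMod 2, x = a • fanoVec i + b • fanoVec j + c • fanoVec k) :
    fanoRank S = 3 := by
  have htop : Submodule.span (ZMod 2) (fanoVec '' (S : Set (Fin 7))) = ⊤ := by
    rw [eq_top_iff]
    intro x _
    obtain ⟨a, b, c, hx⟩ := hsp x
    rw [hx]
    have mi : fanoVec i ∈ Submodule.span (ZMod 2) (fanoVec '' (S : Set (Fin 7))) :=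
      Submodule.subset_span ⟨i, by simpa using hi, rfl⟩
    have mj : fanoVec j ∈ Submodule.span (ZMod 2) (fanoVec '' (S : Set (Fin 7))) :=
      Submodule.subset_span ⟨j, by simpa using hj, rfl⟩
    have mk : fanoVec k ∈ Submodule.span (ZMod 2) (fanoVec '' (S : Set (Fin 7))) :=
      Submodule.subset_span ⟨k, by simpa using hk, rfl⟩
    exact Submodule.add_mem _ (Submodule.add_mem _ (Submodule.smul_mem _ a mi)
      (Submodule.smul_mem _ b mj)) (Submodule.smul_mem _ c mk)
  rw [fanoRank, htop, finrank_top, Module.finrank_fintype_fun_eq_card]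
  simp

lemma rank_two (i j k : Fin 7) (hsum : fanoVec k = fanoVec i + fanoVec j)
    (hind : ∀ a b : ZMod 2, a • fanoVec i + b • fanoVec j = 0 → a = 0 ∧ b = 0) :
    fanoRank {i, j, k} = 2 := by
  have himg : fanoVec '' (({i, j, k} : Finset (Fin 7)) : Set (Fin 7))
      = {fanoVec i, fanoVec j, fanoVec k} := by
    simp [Set.image_insert_eq]
  have hrange : Set.range ![fanoVec i, fanoVec j] = {fanoVec i, fanoVec j} := by
    simp [Matrix.range_cons, Matrix.range_empty, Set.pair_comm]
  have hspan : Submodule.span (ZMod 2) ({fanoVec i, fanoVec j, fanoVec k} :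
      Set (Fin 3 → ZMod 2)) = Submodule.span (ZMod 2) (Set.range ![fanoVec i, fanoVec j]) := by
    rw [hrange]
    apply le_antisymm
    · rw [Submodule.span_le]
      intro x hx
      rcases hx with h|h|h
      · exact Submodule.subset_span (by simp [h])
      · exact Submodule.subset_span (by simp [h])
      · simp only [Set.mem_singleton_iff] at h
        rw [h, hsum]
        exact Submodule.add_mem _ (Submodule.subset_span (by simp))
          (Submodule.subset_span (by simp))
    · apply Submodule.span_mono
      intro x hx
      simp only [Set.mem_insert_iff, Set.mem_singleton_iff] at hx
      rcases hx with h|h <;> simp [h]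
  have hLI : LinearIndependent (ZMod 2) ![fanoVec i, fanoVec j] := by
    rw [LinearIndependent.pair_iff]
    intro s t hst
    exact hind s t hst
  rw [fanoRank, himg, hspan, finrank_span_eq_card hLI]
  simp


lemma marg_comp (μ : PMF (Fin 7 → ZMod 3)) (S A : Finset (Fin 7)) (hSA : S ⊆ A) :
    marg μ S = (marg μ A).map (fun y (j : {i // i ∈ S}) => y ⟨j.1, hSA j.2⟩) := by
  rw [marg, marg, PMF.map_comp]
  rfl

lemma det_lemma (μ : PMF (Fin 7 → ZMod 3)) (S A : Finset (Fin 7)) (hSA : S ⊆ A)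
    (hent : shannonEntropy 3 (marg μ S) = shannonEntropy 3 (marg μ A)) :
    ∀ x x', x ∈ μ.support → x' ∈ μ.support →
      (∀ i, i ∈ S → x i = x' i) → ∀ i, i ∈ A → x i = x' i := by
  have hmap := marg_comp μ S A hSA
  intro x x' hx hx' hagree i hiA
  have hinj := inj_on_support_of_entropy_map_eq (marg μ A)
      (fun y (j : {i // i ∈ S}) => y ⟨j.1, hSA j.2⟩) (by rw [← hmap]; exact hent)
  have hxm : marg μ A (fun j => x j.1) ≠ 0 := by
    rw [← PMF.mem_support_iff, marg, PMF.support_map]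
    exact ⟨x, hx, rfl⟩
  have hx'm : marg μ A (fun j => x' j.1) ≠ 0 := by
    rw [← PMF.mem_support_iff, marg, PMF.support_map]
    exact ⟨x', hx', rfl⟩
  have heq := hinj _ _ hxm hx'm (funext fun j => hagree j.1 j.2)
  exact congrFun heq ⟨i, hiA⟩

lemma supp_full (μ : PMF (Fin 7 → ZMod 3)) (S : Finset (Fin 7)) (k : ℕ)
    (hk : S.card = k) (hH : shannonEntropy 3 (marg μ S) = k) :
    ∀ b, marg μ S b ≠ 0 := by
  have hc : Fintype.card ({ i // i ∈ S } → ZMod 3) = 3 ^ k := by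
    rw [Fintype.card_fun, Fintype.card_coe, hk]
    simp
  apply full_support_of_entropy_eq_log_card
  · rw [hc]; positivity
  · rw [hH, hc]
    push_cast
    rw [Real.logb_pow, Real.logb_self_eq_one (by norm_num)]
    ring

lemma surj_coords (μ : PMF (Fin 7 → ZMod 3)) (S : Finset (Fin 7))
    (hs : ∀ b, marg μ S b ≠ 0) (y : Fin 7 → ZMod 3) :
    ∃ x ∈ μ.support, ∀ i, i ∈ S → x i = y i := by
  have hb := hs (fun j => y j.1)
  have hmem : (fun (j : {i // i ∈ S}) => y j.1) ∈ (marg μ S).support :=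
    (PMF.mem_support_iff _ _).mpr hb
  rw [marg, PMF.support_map] at hmem
  obtain ⟨x, hx, he⟩ := hmem
  exact ⟨x, hx, fun i hi => congrFun he ⟨i, hi⟩⟩

/-- The dual `F_7^*` of the Fano matroid, with rank function
`A ↦ r(E ∖ A) + |A| − r(E)`, is not 3-entropic. -/
theorem fano_dual_not_three_entropic :
    ¬ ∃ μ : PMF (Fin 7 → ZMod 3),
      ∀ A : Finset (Fin 7),
        shannonEntropy 3 (marg μ A) = (fanoRank Aᶜ : ℝ) + A.card - 3 := by
  rintro ⟨μ, hμ⟩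
  -- entropy values from the rank function of the dual Fano matroid
  have hUniv : shannonEntropy 3 (marg μ (Finset.univ : Finset (Fin 7))) = 4 := by
    have hc : (Finset.univ : Finset (Fin 7))ᶜ = ∅ := by decide
    have hcard : (Finset.univ : Finset (Fin 7)).card = 7 := by decide
    rw [hμ, hc, rank_empty, hcard]
    norm_num
  have hA4 : shannonEntropy 3 (marg μ ({0,1,2,3} : Finset (Fin 7))) = 4 := by
    have hc : ({0,1,2,3} : Finset (Fin 7))ᶜ = {4,5,6} := by decide
    have hcard : ({0,1,2,3} : Finset (Fin 7)).card = 4 := by decide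
    rw [hμ, hc, rank_three {4,5,6} 4 5 6 (by decide) (by decide) (by decide) (by decide),
      hcard]
    norm_num
  have e123 : shannonEntropy 3 (marg μ ({1,2,3} : Finset (Fin 7))) = 3 := by
    have hc : ({1,2,3} : Finset (Fin 7))ᶜ = {0,4,5,6} := by decide
    have hcard : ({1,2,3} : Finset (Fin 7)).card = 3 := by decide
    rw [hμ, hc, rank_three {0,4,5,6} 0 4 5 (by decide) (by decide) (by decide) (by decide),
      hcard]
    norm_num
  have e023 : shannonEntropy 3 (marg μ ({0,2,3} : Finset (Fin 7))) = 3 := by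
    have hc : ({0,2,3} : Finset (Fin 7))ᶜ = {1,4,5,6} := by decide
    have hcard : ({0,2,3} : Finset (Fin 7)).card = 3 := by decide
    rw [hμ, hc, rank_three {1,4,5,6} 1 4 5 (by decide) (by decide) (by decide) (by decide),
      hcard]
    norm_num
  have e012 : shannonEntropy 3 (marg μ ({0,1,2} : Finset (Fin 7))) = 3 := by
    have hc : ({0,1,2} : Finset (Fin 7))ᶜ = {3,4,5,6} := by decide
    have hcard : ({0,1,2} : Finset (Fin 7)).card = 3 := by decide
    rw [hμ, hc, rank_three {3,4,5,6} 3 4 6 (by decide) (by decide) (by decide) (by decide),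
      hcard]
    norm_num
  have e014 : shannonEntropy 3 (marg μ ({0,1,4} : Finset (Fin 7))) = 3 := by
    have hc : ({0,1,4} : Finset (Fin 7))ᶜ = {2,3,5,6} := by decide
    have hcard : ({0,1,4} : Finset (Fin 7)).card = 3 := by decide
    rw [hμ, hc, rank_three {2,3,5,6} 2 3 5 (by decide) (by decide) (by decide) (by decide),
      hcard]
    norm_num
  have e034 : shannonEntropy 3 (marg μ ({0,3,4} : Finset (Fin 7))) = 3 := by
    have hc : ({0,3,4} : Finset (Fin 7))ᶜ = {1,2,5,6} := by decide
    have hcard : ({0,3,4} : Finset (Fin 7)).card = 3 := by decide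
    rw [hμ, hc, rank_three {1,2,5,6} 1 2 6 (by decide) (by decide) (by decide) (by decide),
      hcard]
    norm_num
  have e135 : shannonEntropy 3 (marg μ ({1,3,5} : Finset (Fin 7))) = 3 := by
    have hc : ({1,3,5} : Finset (Fin 7))ᶜ = {0,2,4,6} := by decide
    have hcard : ({1,3,5} : Finset (Fin 7)).card = 3 := by decide
    rw [hμ, hc, rank_three {0,2,4,6} 0 2 6 (by decide) (by decide) (by decide) (by decide),
      hcard]
    norm_num
  have e245 : shannonEntropy 3 (marg μ ({2,4,5} : Finset (Fin 7))) = 3 := by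
    have hc : ({2,4,5} : Finset (Fin 7))ᶜ = {0,1,3,6} := by decide
    have hcard : ({2,4,5} : Finset (Fin 7)).card = 3 := by decide
    rw [hμ, hc, rank_three {0,1,3,6} 0 1 6 (by decide) (by decide) (by decide) (by decide),
      hcard]
    norm_num
  have e124 : shannonEntropy 3 (marg μ ({1,2,4} : Finset (Fin 7))) = 3 := by
    have hc : ({1,2,4} : Finset (Fin 7))ᶜ = {0,3,5,6} := by decide
    have hcard : ({1,2,4} : Finset (Fin 7)).card = 3 := by decide
    rw [hμ, hc, rank_three {0,3,5,6} 0 3 5 (by decide) (by decide) (by decide) (by decide),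
      hcard]
    norm_num
  have e134 : shannonEntropy 3 (marg μ ({1,3,4} : Finset (Fin 7))) = 3 := by
    have hc : ({1,3,4} : Finset (Fin 7))ᶜ = {0,2,5,6} := by decide
    have hcard : ({1,3,4} : Finset (Fin 7)).card = 3 := by decide
    rw [hμ, hc, rank_three {0,2,5,6} 0 2 5 (by decide) (by decide) (by decide) (by decide),
      hcard]
    norm_num
  have e234 : shannonEntropy 3 (marg μ ({2,3,4} : Finset (Fin 7))) = 3 := by
    have hc : ({2,3,4} : Finset (Fin 7))ᶜ = {0,1,5,6} := by decide
    have hcard : ({2,3,4} : Finset (Fin 7)).card = 3 := by decide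
    rw [hμ, hc, rank_three {0,1,5,6} 0 1 5 (by decide) (by decide) (by decide) (by decide),
      hcard]
    norm_num
  have e025 : shannonEntropy 3 (marg μ ({0,2,5} : Finset (Fin 7))) = 3 := by
    have hc : ({0,2,5} : Finset (Fin 7))ᶜ = {1,3,4,6} := by decide
    have hcard : ({0,2,5} : Finset (Fin 7)).card = 3 := by decide
    rw [hμ, hc, rank_three {1,3,4,6} 1 3 4 (by decide) (by decide) (by decide) (by decide),
      hcard]
    norm_num
  have e035 : shannonEntropy 3 (marg μ ({0,3,5} : Finset (Fin 7))) = 3 := by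
    have hc : ({0,3,5} : Finset (Fin 7))ᶜ = {1,2,4,6} := by decide
    have hcard : ({0,3,5} : Finset (Fin 7)).card = 3 := by decide
    rw [hμ, hc, rank_three {1,2,4,6} 1 2 4 (by decide) (by decide) (by decide) (by decide),
      hcard]
    norm_num
  have e235 : shannonEntropy 3 (marg μ ({2,3,5} : Finset (Fin 7))) = 3 := by
    have hc : ({2,3,5} : Finset (Fin 7))ᶜ = {0,1,4,6} := by decide
    have hcard : ({2,3,5} : Finset (Fin 7)).card = 3 := by decide
    rw [hμ, hc, rank_three {0,1,4,6} 0 1 4 (by decide) (by decide) (by decide) (by decide),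
      hcard]
    norm_num
  have e016 : shannonEntropy 3 (marg μ ({0,1,6} : Finset (Fin 7))) = 3 := by
    have hc : ({0,1,6} : Finset (Fin 7))ᶜ = {2,3,4,5} := by decide
    have hcard : ({0,1,6} : Finset (Fin 7)).card = 3 := by decide
    rw [hμ, hc, rank_three {2,3,4,5} 2 3 4 (by decide) (by decide) (by decide) (by decide),
      hcard]
    norm_num
  have e026 : shannonEntropy 3 (marg μ ({0,2,6} : Finset (Fin 7))) = 3 := by
    have hc : ({0,2,6} : Finset (Fin 7))ᶜ = {1,3,4,5} := by decide
    have hcard : ({0,2,6} : Finset (Fin 7)).card = 3 := by decide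
    rw [hμ, hc, rank_three {1,3,4,5} 1 3 4 (by decide) (by decide) (by decide) (by decide),
      hcard]
    norm_num
  have e126 : shannonEntropy 3 (marg μ ({1,2,6} : Finset (Fin 7))) = 3 := by
    have hc : ({1,2,6} : Finset (Fin 7))ᶜ = {0,3,4,5} := by decide
    have hcard : ({1,2,6} : Finset (Fin 7)).card = 3 := by decide
    rw [hμ, hc, rank_three {0,3,4,5} 0 3 4 (by decide) (by decide) (by decide) (by decide),
      hcard]
    norm_num
  have a1234 : shannonEntropy 3 (marg μ ({1,2,3,4} : Finset (Fin 7))) = 3 := by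
    have hc : ({1,2,3,4} : Finset (Fin 7))ᶜ = {0,5,6} := by decide
    have hcard : ({1,2,3,4} : Finset (Fin 7)).card = 4 := by decide
    rw [hμ, hc, rank_two 0 5 6 (by decide) (by decide), hcard]
    norm_num
  have a0235 : shannonEntropy 3 (marg μ ({0,2,3,5} : Finset (Fin 7))) = 3 := by
    have hc : ({0,2,3,5} : Finset (Fin 7))ᶜ = {1,4,6} := by decide
    have hcard : ({0,2,3,5} : Finset (Fin 7)).card = 4 := by decide
    rw [hμ, hc, rank_two 1 4 6 (by decide) (by decide), hcard]
    norm_num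
  have a0126 : shannonEntropy 3 (marg μ ({0,1,2,6} : Finset (Fin 7))) = 3 := by
    have hc : ({0,1,2,6} : Finset (Fin 7))ᶜ = {3,4,5} := by decide
    have hcard : ({0,1,2,6} : Finset (Fin 7)).card = 4 := by decide
    rw [hμ, hc, rank_two 3 4 5 (by decide) (by decide), hcard]
    norm_num
  have a0145 : shannonEntropy 3 (marg μ ({0,1,4,5} : Finset (Fin 7))) = 3 := by
    have hc : ({0,1,4,5} : Finset (Fin 7))ᶜ = {2,3,6} := by decide
    have hcard : ({0,1,4,5} : Finset (Fin 7)).card = 4 := by decide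
    rw [hμ, hc, rank_two 2 3 6 (by decide) (by decide), hcard]
    norm_num
  have a0346 : shannonEntropy 3 (marg μ ({0,3,4,6} : Finset (Fin 7))) = 3 := by
    have hc : ({0,3,4,6} : Finset (Fin 7))ᶜ = {1,2,5} := by decide
    have hcard : ({0,3,4,6} : Finset (Fin 7)).card = 4 := by decide
    rw [hμ, hc, rank_two 1 2 5 (by decide) (by decide), hcard]
    norm_num
  have a1356 : shannonEntropy 3 (marg μ ({1,3,5,6} : Finset (Fin 7))) = 3 := by
    have hc : ({1,3,5,6} : Finset (Fin 7))ᶜ = {0,2,4} := by decide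
    have hcard : ({1,3,5,6} : Finset (Fin 7)).card = 4 := by decide
    rw [hμ, hc, rank_two 0 2 4 (by decide) (by decide), hcard]
    norm_num
  have a2456 : shannonEntropy 3 (marg μ ({2,4,5,6} : Finset (Fin 7))) = 3 := by
    have hc : ({2,4,5,6} : Finset (Fin 7))ᶜ = {0,1,3} := by decide
    have hcard : ({2,4,5,6} : Finset (Fin 7)).card = 4 := by decide
    rw [hμ, hc, rank_two 0 1 3 (by decide) (by decide), hcard]
    norm_num
  have sA4 := supp_full μ {0,1,2,3} 4 (by decide) (by rw [hA4]; norm_num)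
  have s124 := supp_full μ {1,2,4} 3 (by decide) (by rw [e124]; norm_num)
  have s134 := supp_full μ {1,3,4} 3 (by decide) (by rw [e134]; norm_num)
  have s234 := supp_full μ {2,3,4} 3 (by decide) (by rw [e234]; norm_num)
  have s025 := supp_full μ {0,2,5} 3 (by decide) (by rw [e025]; norm_num)
  have s035 := supp_full μ {0,3,5} 3 (by decide) (by rw [e035]; norm_num)
  have s235 := supp_full μ {2,3,5} 3 (by decide) (by rw [e235]; norm_num)
  have s016 := supp_full μ {0,1,6} 3 (by decide) (by rw [e016]; norm_num)
  have s026 := supp_full μ {0,2,6} 3 (by decide) (by rw [e026]; norm_num)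
  have s126 := supp_full μ {1,2,6} 3 (by decide) (by rw [e126]; norm_num)
  have dTop := det_lemma μ {0,1,2,3} Finset.univ (Finset.subset_univ _)
    (by rw [hA4, hUniv])
  have d1234 := det_lemma μ {1,2,3} {1,2,3,4} (by decide) (by rw [e123, a1234])
  have d0235 := det_lemma μ {0,2,3} {0,2,3,5} (by decide) (by rw [e023, a0235])
  have d0126 := det_lemma μ {0,1,2} {0,1,2,6} (by decide) (by rw [e012, a0126])
  have d0145 := det_lemma μ {0,1,4} {0,1,4,5} (by decide) (by rw [e014, a0145])
  have d0346 := det_lemma μ {0,3,4} {0,3,4,6} (by decide) (by rw [e034, a0346])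
  have d1356 := det_lemma μ {1,3,5} {1,3,5,6} (by decide) (by rw [e135, a1356])
  have d2456 := det_lemma μ {2,4,5} {2,4,5,6} (by decide) (by rw [e245, a2456])
  -- a support element with arbitrary prescribed first four coordinates
  have hex : ∀ t0 t1 t2 t3 : ZMod 3, ∃ x, x ∈ μ.support ∧
      x 0 = t0 ∧ x 1 = t1 ∧ x 2 = t2 ∧ x 3 = t3 := by
    intro t0 t1 t2 t3
    obtain ⟨x, hx, hco⟩ := surj_coords μ {0,1,2,3} sA4
      (fun i => if i = 0 then t0 else if i = 1 then t1 else if i = 2 then t2 else t3)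
    exact ⟨x, hx, hco 0 (by decide), hco 1 (by decide), hco 2 (by decide),
      hco 3 (by decide)⟩
  choose X hmem hX0 hX1 hX2 hX3 using hex
  have M0123 : ∀ i : Fin 7, i ∈ ({0,1,2,3} : Finset (Fin 7)) →
      i = 0 ∨ i = 1 ∨ i = 2 ∨ i = 3 := by decide
  have M123 : ∀ i : Fin 7, i ∈ ({1,2,3} : Finset (Fin 7)) → i = 1 ∨ i = 2 ∨ i = 3 := by
    decide
  have M023 : ∀ i : Fin 7, i ∈ ({0,2,3} : Finset (Fin 7)) → i = 0 ∨ i = 2 ∨ i = 3 := by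
    decide
  have M012 : ∀ i : Fin 7, i ∈ ({0,1,2} : Finset (Fin 7)) → i = 0 ∨ i = 1 ∨ i = 2 := by
    decide
  have M014 : ∀ i : Fin 7, i ∈ ({0,1,4} : Finset (Fin 7)) → i = 0 ∨ i = 1 ∨ i = 4 := by
    decide
  have M034 : ∀ i : Fin 7, i ∈ ({0,3,4} : Finset (Fin 7)) → i = 0 ∨ i = 3 ∨ i = 4 := by
    decide
  have M135 : ∀ i : Fin 7, i ∈ ({1,3,5} : Finset (Fin 7)) → i = 1 ∨ i = 3 ∨ i = 5 := by
    decide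
  have M245 : ∀ i : Fin 7, i ∈ ({2,4,5} : Finset (Fin 7)) → i = 2 ∨ i = 4 ∨ i = 5 := by
    decide
  -- the coordinates 4, 5, 6 are functions of a 3-subset of the first four coordinates
  have hfwd : ∀ t0 t1 t2 t3, X t0 t1 t2 t3 4 = X 0 t1 t2 t3 4 := by
    intro t0 t1 t2 t3
    refine d1234 _ _ (hmem t0 t1 t2 t3) (hmem 0 t1 t2 t3) ?_ 4 (by decide)
    intro i hi
    rcases M123 i hi with h|h|h <;> subst h
    · rw [hX1, hX1]
    · rw [hX2, hX2]
    · rw [hX3, hX3]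
  have hgwd : ∀ t0 t1 t2 t3, X t0 t1 t2 t3 5 = X t0 0 t2 t3 5 := by
    intro t0 t1 t2 t3
    refine d0235 _ _ (hmem t0 t1 t2 t3) (hmem t0 0 t2 t3) ?_ 5 (by decide)
    intro i hi
    rcases M023 i hi with h|h|h <;> subst h
    · rw [hX0, hX0]
    · rw [hX2, hX2]
    · rw [hX3, hX3]
  have hhwd : ∀ t0 t1 t2 t3, X t0 t1 t2 t3 6 = X t0 t1 t2 0 6 := by
    intro t0 t1 t2 t3
    refine d0126 _ _ (hmem t0 t1 t2 t3) (hmem t0 t1 t2 0) ?_ 6 (by decide)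
    intro i hi
    rcases M012 i hi with h|h|h <;> subst h
    · rw [hX0, hX0]
    · rw [hX1, hX1]
    · rw [hX2, hX2]
  have sf1 : ∀ y z : ZMod 3, Function.Surjective (fun x => X 0 x y z 4) := by
    intro y z c
    obtain ⟨w, hw, hco⟩ := surj_coords μ {2,3,4} s234
      (fun i => if i = 2 then y else if i = 3 then z else c)
    have e2 : w 2 = y := hco 2 (by decide)
    have e3 : w 3 = z := hco 3 (by decide)
    have e4 : w 4 = c := hco 4 (by decide)
    have hagree : ∀ i, i ∈ ({0,1,2,3} : Finset (Fin 7)) →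
        w i = X (w 0) (w 1) (w 2) (w 3) i := by
      intro i hi
      rcases M0123 i hi with h|h|h|h <;> subst h
      · exact (hX0 _ _ _ _).symm
      · exact (hX1 _ _ _ _).symm
      · exact (hX2 _ _ _ _).symm
      · exact (hX3 _ _ _ _).symm
    have hval := dTop w _ hw (hmem (w 0) (w 1) (w 2) (w 3)) hagree
    refine ⟨w 1, ?_⟩
    show X 0 (w 1) y z 4 = c
    have h4 := hval 4 (Finset.mem_univ 4)
    rw [← e2, ← e3, ← hfwd (w 0), ← h4, e4]
  have sf2 : ∀ y z : ZMod 3, Function.Surjective (fun y' => X 0 y y' z 4) := by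
    intro y z c
    obtain ⟨w, hw, hco⟩ := surj_coords μ {1,3,4} s134
      (fun i => if i = 1 then y else if i = 3 then z else c)
    have e1 : w 1 = y := hco 1 (by decide)
    have e3 : w 3 = z := hco 3 (by decide)
    have e4 : w 4 = c := hco 4 (by decide)
    have hagree : ∀ i, i ∈ ({0,1,2,3} : Finset (Fin 7)) →
        w i = X (w 0) (w 1) (w 2) (w 3) i := by
      intro i hi
      rcases M0123 i hi with h|h|h|h <;> subst h
      · exact (hX0 _ _ _ _).symm
      · exact (hX1 _ _ _ _).symm
      · exact (hX2 _ _ _ _).symm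
      · exact (hX3 _ _ _ _).symm
    have hval := dTop w _ hw (hmem (w 0) (w 1) (w 2) (w 3)) hagree
    refine ⟨w 2, ?_⟩
    show X 0 y (w 2) z 4 = c
    have h4 := hval 4 (Finset.mem_univ 4)
    rw [← e1, ← e3, ← hfwd (w 0), ← h4, e4]
  have sf3 : ∀ y z : ZMod 3, Function.Surjective (fun z' => X 0 y z z' 4) := by
    intro y z c
    obtain ⟨w, hw, hco⟩ := surj_coords μ {1,2,4} s124
      (fun i => if i = 1 then y else if i = 2 then z else c)
    have e1 : w 1 = y := hco 1 (by decide)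
    have e2 : w 2 = z := hco 2 (by decide)
    have e4 : w 4 = c := hco 4 (by decide)
    have hagree : ∀ i, i ∈ ({0,1,2,3} : Finset (Fin 7)) →
        w i = X (w 0) (w 1) (w 2) (w 3) i := by
      intro i hi
      rcases M0123 i hi with h|h|h|h <;> subst h
      · exact (hX0 _ _ _ _).symm
      · exact (hX1 _ _ _ _).symm
      · exact (hX2 _ _ _ _).symm
      · exact (hX3 _ _ _ _).symm
    have hval := dTop w _ hw (hmem (w 0) (w 1) (w 2) (w 3)) hagree
    refine ⟨w 3, ?_⟩
    show X 0 y z (w 3) 4 = c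
    have h4 := hval 4 (Finset.mem_univ 4)
    rw [← e1, ← e2, ← hfwd (w 0), ← h4, e4]
  have sg1 : ∀ y z : ZMod 3, Function.Surjective (fun x => X x 0 y z 5) := by
    intro y z c
    obtain ⟨w, hw, hco⟩ := surj_coords μ {2,3,5} s235
      (fun i => if i = 2 then y else if i = 3 then z else c)
    have e2 : w 2 = y := hco 2 (by decide)
    have e3 : w 3 = z := hco 3 (by decide)
    have e5 : w 5 = c := hco 5 (by decide)
    have hagree : ∀ i, i ∈ ({0,1,2,3} : Finset (Fin 7)) →
        w i = X (w 0) (w 1) (w 2) (w 3) i := by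
      intro i hi
      rcases M0123 i hi with h|h|h|h <;> subst h
      · exact (hX0 _ _ _ _).symm
      · exact (hX1 _ _ _ _).symm
      · exact (hX2 _ _ _ _).symm
      · exact (hX3 _ _ _ _).symm
    have hval := dTop w _ hw (hmem (w 0) (w 1) (w 2) (w 3)) hagree
    refine ⟨w 0, ?_⟩
    show X (w 0) 0 y z 5 = c
    have h5 := hval 5 (Finset.mem_univ 5)
    rw [← e2, ← e3, ← hgwd (w 0) (w 1), ← h5, e5]
  have sg2 : ∀ y z : ZMod 3, Function.Surjective (fun y' => X y 0 y' z 5) := by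
    intro y z c
    obtain ⟨w, hw, hco⟩ := surj_coords μ {0,3,5} s035
      (fun i => if i = 0 then y else if i = 3 then z else c)
    have e0 : w 0 = y := hco 0 (by decide)
    have e3 : w 3 = z := hco 3 (by decide)
    have e5 : w 5 = c := hco 5 (by decide)
    have hagree : ∀ i, i ∈ ({0,1,2,3} : Finset (Fin 7)) →
        w i = X (w 0) (w 1) (w 2) (w 3) i := by
      intro i hi
      rcases M0123 i hi with h|h|h|h <;> subst h
      · exact (hX0 _ _ _ _).symm
      · exact (hX1 _ _ _ _).symm
      · exact (hX2 _ _ _ _).symm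
      · exact (hX3 _ _ _ _).symm
    have hval := dTop w _ hw (hmem (w 0) (w 1) (w 2) (w 3)) hagree
    refine ⟨w 2, ?_⟩
    show X y 0 (w 2) z 5 = c
    have h5 := hval 5 (Finset.mem_univ 5)
    rw [← e0, ← e3, ← hgwd (w 0) (w 1), ← h5, e5]
  have sg3 : ∀ y z : ZMod 3, Function.Surjective (fun z' => X y 0 z z' 5) := by
    intro y z c
    obtain ⟨w, hw, hco⟩ := surj_coords μ {0,2,5} s025
      (fun i => if i = 0 then y else if i = 2 then z else c)
    have e0 : w 0 = y := hco 0 (by decide)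
    have e2 : w 2 = z := hco 2 (by decide)
    have e5 : w 5 = c := hco 5 (by decide)
    have hagree : ∀ i, i ∈ ({0,1,2,3} : Finset (Fin 7)) →
        w i = X (w 0) (w 1) (w 2) (w 3) i := by
      intro i hi
      rcases M0123 i hi with h|h|h|h <;> subst h
      · exact (hX0 _ _ _ _).symm
      · exact (hX1 _ _ _ _).symm
      · exact (hX2 _ _ _ _).symm
      · exact (hX3 _ _ _ _).symm
    have hval := dTop w _ hw (hmem (w 0) (w 1) (w 2) (w 3)) hagree
    refine ⟨w 3, ?_⟩
    show X y 0 z (w 3) 5 = c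
    have h5 := hval 5 (Finset.mem_univ 5)
    rw [← e0, ← e2, ← hgwd (w 0) (w 1), ← h5, e5]
  have sh1 : ∀ y z : ZMod 3, Function.Surjective (fun x => X x y z 0 6) := by
    intro y z c
    obtain ⟨w, hw, hco⟩ := surj_coords μ {1,2,6} s126
      (fun i => if i = 1 then y else if i = 2 then z else c)
    have e1 : w 1 = y := hco 1 (by decide)
    have e2 : w 2 = z := hco 2 (by decide)
    have e6 : w 6 = c := hco 6 (by decide)
    have hagree : ∀ i, i ∈ ({0,1,2,3} : Finset (Fin 7)) →
        w i = X (w 0) (w 1) (w 2) (w 3) i := by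
      intro i hi
      rcases M0123 i hi with h|h|h|h <;> subst h
      · exact (hX0 _ _ _ _).symm
      · exact (hX1 _ _ _ _).symm
      · exact (hX2 _ _ _ _).symm
      · exact (hX3 _ _ _ _).symm
    have hval := dTop w _ hw (hmem (w 0) (w 1) (w 2) (w 3)) hagree
    refine ⟨w 0, ?_⟩
    show X (w 0) y z 0 6 = c
    have h6 := hval 6 (Finset.mem_univ 6)
    rw [← e1, ← e2, ← hhwd (w 0) (w 1) (w 2) (w 3), ← h6, e6]
  have sh2 : ∀ y z : ZMod 3, Function.Surjective (fun y' => X y y' z 0 6) := by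
    intro y z c
    obtain ⟨w, hw, hco⟩ := surj_coords μ {0,2,6} s026
      (fun i => if i = 0 then y else if i = 2 then z else c)
    have e0 : w 0 = y := hco 0 (by decide)
    have e2 : w 2 = z := hco 2 (by decide)
    have e6 : w 6 = c := hco 6 (by decide)
    have hagree : ∀ i, i ∈ ({0,1,2,3} : Finset (Fin 7)) →
        w i = X (w 0) (w 1) (w 2) (w 3) i := by
      intro i hi
      rcases M0123 i hi with h|h|h|h <;> subst h
      · exact (hX0 _ _ _ _).symm
      · exact (hX1 _ _ _ _).symm
      · exact (hX2 _ _ _ _).symm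
      · exact (hX3 _ _ _ _).symm
    have hval := dTop w _ hw (hmem (w 0) (w 1) (w 2) (w 3)) hagree
    refine ⟨w 1, ?_⟩
    show X y (w 1) z 0 6 = c
    have h6 := hval 6 (Finset.mem_univ 6)
    rw [← e0, ← e2, ← hhwd (w 0) (w 1) (w 2) (w 3), ← h6, e6]
  have sh3 : ∀ y z : ZMod 3, Function.Surjective (fun z' => X y z z' 0 6) := by
    intro y z c
    obtain ⟨w, hw, hco⟩ := surj_coords μ {0,1,6} s016
      (fun i => if i = 0 then y else if i = 1 then z else c)
    have e0 : w 0 = y := hco 0 (by decide)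
    have e1 : w 1 = z := hco 1 (by decide)
    have e6 : w 6 = c := hco 6 (by decide)
    have hagree : ∀ i, i ∈ ({0,1,2,3} : Finset (Fin 7)) →
        w i = X (w 0) (w 1) (w 2) (w 3) i := by
      intro i hi
      rcases M0123 i hi with h|h|h|h <;> subst h
      · exact (hX0 _ _ _ _).symm
      · exact (hX1 _ _ _ _).symm
      · exact (hX2 _ _ _ _).symm
      · exact (hX3 _ _ _ _).symm
    have hval := dTop w _ hw (hmem (w 0) (w 1) (w 2) (w 3)) hagree
    refine ⟨w 2, ?_⟩
    show X y z (w 2) 0 6 = c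
    have h6 := hval 6 (Finset.mem_univ 6)
    rw [← e0, ← e1, ← hhwd (w 0) (w 1) (w 2) (w 3), ← h6, e6]
  -- injectivity and affine structure
  have if1 : ∀ y z, Function.Injective (fun x => X 0 x y z 4) :=
    fun y z => Finite.injective_iff_surjective.mpr (sf1 y z)
  have if2 : ∀ x z, Function.Injective (fun y => X 0 x y z 4) :=
    fun x z => Finite.injective_iff_surjective.mpr (sf2 x z)
  have if3 : ∀ x y, Function.Injective (fun z => X 0 x y z 4) :=
    fun x y => Finite.injective_iff_surjective.mpr (sf3 x y)
  have ig1 : ∀ y z, Function.Injective (fun x => X x 0 y z 5) :=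
    fun y z => Finite.injective_iff_surjective.mpr (sg1 y z)
  have ig2 : ∀ x z, Function.Injective (fun y => X x 0 y z 5) :=
    fun x z => Finite.injective_iff_surjective.mpr (sg2 x z)
  have ig3 : ∀ x y, Function.Injective (fun z => X x 0 y z 5) :=
    fun x y => Finite.injective_iff_surjective.mpr (sg3 x y)
  have ih1 : ∀ y z, Function.Injective (fun x => X x y z 0 6) :=
    fun y z => Finite.injective_iff_surjective.mpr (sh1 y z)
  have ih2 : ∀ x z, Function.Injective (fun y => X x y z 0 6) :=
    fun x z => Finite.injective_iff_surjective.mpr (sh2 x z)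
  have ih3 : ∀ x y, Function.Injective (fun z => X x y z 0 6) :=
    fun x y => Finite.injective_iff_surjective.mpr (sh3 x y)
  have haff : ∀ x y z, X 0 x y z 4 = X 0 0 0 0 4 + (X 0 1 0 0 4 - X 0 0 0 0 4) * x
      + (X 0 0 1 0 4 - X 0 0 0 0 4) * y + (X 0 0 0 1 4 - X 0 0 0 0 4) * z :=
    cube_affine (fun x y z => X 0 x y z 4) if1 if2 if3
  have hagg : ∀ x y z, X x 0 y z 5 = X 0 0 0 0 5 + (X 1 0 0 0 5 - X 0 0 0 0 5) * x
      + (X 0 0 1 0 5 - X 0 0 0 0 5) * y + (X 0 0 0 1 5 - X 0 0 0 0 5) * z :=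
    cube_affine (fun x y z => X x 0 y z 5) ig1 ig2 ig3
  have hahh : ∀ x y z, X x y z 0 6 = X 0 0 0 0 6 + (X 1 0 0 0 6 - X 0 0 0 0 6) * x
      + (X 0 1 0 0 6 - X 0 0 0 0 6) * y + (X 0 0 1 0 6 - X 0 0 0 0 6) * z :=
    cube_affine (fun x y z => X x y z 0 6) ih1 ih2 ih3
  set A1 := X 0 1 0 0 4 - X 0 0 0 0 4 with hA1def
  set A2 := X 0 0 1 0 4 - X 0 0 0 0 4 with hA2def
  set A3 := X 0 0 0 1 4 - X 0 0 0 0 4 with hA3def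
  set B0 := X 1 0 0 0 5 - X 0 0 0 0 5 with hB0def
  set B2 := X 0 0 1 0 5 - X 0 0 0 0 5 with hB2def
  set B3 := X 0 0 0 1 5 - X 0 0 0 0 5 with hB3def
  set C0 := X 1 0 0 0 6 - X 0 0 0 0 6 with hC0def
  set C1 := X 0 1 0 0 6 - X 0 0 0 0 6 with hC1def
  set C2 := X 0 0 1 0 6 - X 0 0 0 0 6 with hC2def
  have hA1 : A1 ≠ 0 := fun h => zmod3_one_ne_zero (if1 0 0 (sub_eq_zero.mp (hA1def ▸ h)))
  have hA2 : A2 ≠ 0 := fun h => zmod3_one_ne_zero (if2 0 0 (sub_eq_zero.mp (hA2def ▸ h)))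
  have hA3 : A3 ≠ 0 := fun h => zmod3_one_ne_zero (if3 0 0 (sub_eq_zero.mp (hA3def ▸ h)))
  have hB0 : B0 ≠ 0 := fun h => zmod3_one_ne_zero (ig1 0 0 (sub_eq_zero.mp (hB0def ▸ h)))
  have hB2 : B2 ≠ 0 := fun h => zmod3_one_ne_zero (ig2 0 0 (sub_eq_zero.mp (hB2def ▸ h)))
  have hB3 : B3 ≠ 0 := fun h => zmod3_one_ne_zero (ig3 0 0 (sub_eq_zero.mp (hB3def ▸ h)))
  have hC0 : C0 ≠ 0 := fun h => zmod3_one_ne_zero (ih1 0 0 (sub_eq_zero.mp (hC0def ▸ h)))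
  have hC1 : C1 ≠ 0 := fun h => zmod3_one_ne_zero (ih2 0 0 (sub_eq_zero.mp (hC1def ▸ h)))
  have hC2 : C2 ≠ 0 := fun h => zmod3_one_ne_zero (ih3 0 0 (sub_eq_zero.mp (hC2def ▸ h)))
  -- the four remaining Fano lines give four multiplicative relations
  have eq1 : B2 * A3 = B3 * A2 := by
    have hagree : ∀ i, i ∈ ({0,1,4} : Finset (Fin 7)) → X 0 0 A3 0 i = X 0 0 0 A2 i := by
      intro i hi
      rcases M014 i hi with h|h|h <;> subst h
      · rw [hX0, hX0]
      · rw [hX1, hX1]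
      · rw [haff 0 A3 0, haff 0 0 A2]; ring
    have h5 := d0145 _ _ (hmem 0 0 A3 0) (hmem 0 0 0 A2) hagree 5 (by decide)
    rw [hagg 0 A3 0, hagg 0 0 A2] at h5
    linear_combination h5
  have eq2 : C1 * A2 = C2 * A1 := by
    have hagree : ∀ i, i ∈ ({0,3,4} : Finset (Fin 7)) → X 0 A2 0 0 i = X 0 0 A1 0 i := by
      intro i hi
      rcases M034 i hi with h|h|h <;> subst h
      · rw [hX0, hX0]
      · rw [hX3, hX3]
      · rw [haff A2 0 0, haff 0 A1 0]; ring
    have h6 := d0346 _ _ (hmem 0 A2 0 0) (hmem 0 0 A1 0) hagree 6 (by decide)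
    rw [hahh 0 A2 0, hahh 0 0 A1] at h6
    linear_combination h6
  have eq3 : C0 * B2 = C2 * B0 := by
    have hagree : ∀ i, i ∈ ({1,3,5} : Finset (Fin 7)) → X B2 0 0 0 i = X 0 0 B0 0 i := by
      intro i hi
      rcases M135 i hi with h|h|h <;> subst h
      · rw [hX1, hX1]
      · rw [hX3, hX3]
      · rw [hagg B2 0 0, hagg 0 B0 0]; ring
    have h6 := d1356 _ _ (hmem B2 0 0 0) (hmem 0 0 B0 0) hagree 6 (by decide)
    rw [hahh B2 0 0, hahh 0 0 B0] at h6
    linear_combination h6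
  have eq4 : C0 * (B0 * B3) + C1 * (A1 * A3) = 0 := by
    have hagree : ∀ i, i ∈ ({2,4,5} : Finset (Fin 7)) →
        X 0 0 0 1 i = X (B0 * B3) (A1 * A3) 0 0 i := by
      intro i hi
      rcases M245 i hi with h|h|h <;> subst h
      · rw [hX2, hX2]
      · rw [hfwd (B0 * B3) (A1 * A3) 0 0, haff 0 0 1, haff (A1 * A3) 0 0]
        linear_combination (-A3) * sq_one A1 hA1
      · rw [hgwd (B0 * B3) (A1 * A3) 0 0, hagg 0 0 1, hagg (B0 * B3) 0 0]
        linear_combination (-B3) * sq_one B0 hB0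
    have h6 := d2456 _ _ (hmem 0 0 0 1) (hmem (B0 * B3) (A1 * A3) 0 0) hagree 6 (by decide)
    rw [hhwd 0 0 0 1, hhwd (B0 * B3) (A1 * A3) 0 0, hahh 0 0 0,
      hahh (B0 * B3) (A1 * A3) 0] at h6
    linear_combination -h6
  exact final_contra A1 A2 A3 B0 B2 B3 C0 C1 C2 hA1 hA2 hA3 hB0 hB2 hB3 hC0 hC1 hC2
    eq1 eq2 eq3 eq4
end

section
/- Let X_1, X_2, X_3, X_7 be F_3-valued random variables, each uniform, such that H(X_1,X_2,X_3)=3, H(X_2,X_3,X_7)=2 with H(X_7 | X_2, X_3) = 0, and H(X_7 | X_1, X_1 + X_2 + X_3) = 0 (all entropies base 3). Then H(X_7 | X_2 + X_3) = 0 and H(X_2 + X_3 | X_7) = 0, i.e., X_7 and X_2 + X_3 determine each other. -/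
open scoped Classical BigOperators

/-- Pushing a weighted sum through a composition of fibers. -/
lemma sum_ite_comp {α β γ : Type*} [Fintype α] [Fintype β] [DecidableEq β] [DecidableEq γ]
    (p : α → ℝ) (f : α → β) (π : β → γ) (c : γ) :
    (∑ b : β, if π b = c then (∑ a : α, if f a = b then p a else 0) else 0)
      = ∑ a : α, if π (f a) = c then p a else 0 := by
  have h1 : ∀ b : β, (if π b = c then (∑ a : α, if f a = b then p a else 0) else 0)
      = ∑ a : α, if f a = b then (if π b = c then p a else 0) else 0 := by
    intro b; by_cases h : π b = c <;> simp [h]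
  rw [Finset.sum_congr rfl fun b _ => h1 b, Finset.sum_comm]
  refine Finset.sum_congr rfl fun a _ => ?_
  rw [Finset.sum_ite_eq Finset.univ (f a) (fun b => if π b = c then p a else 0)]
  simp




/-- Max entropy implies uniform. -/
lemma unif_of_max_entropy {α : Type*} [Fintype α] (p : α → ℝ)
    (hp0 : ∀ a, 0 ≤ p a) (hp1 : ∑ a : α, p a = 1)
    (hcard : 0 < Fintype.card α)
    (hH : -∑ a : α, p a * Real.logb 3 (p a) = Real.logb 3 (Fintype.card α)) :
    ∀ a, p a = 1 / (Fintype.card α : ℝ) := by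
  set n : ℝ := (Fintype.card α : ℝ) with hn
  have hnpos : (0:ℝ) < n := by rw [hn]; exact_mod_cast hcard
  have hlog3 : (0:ℝ) < Real.log 3 := Real.log_pos (by norm_num)
  have hsum_plogp : ∑ a : α, p a * Real.log (p a) = -Real.log n := by
    simp only [Real.logb, ← mul_div_assoc, ← Finset.sum_div] at hH
    field_simp at hH
    have h2 : (∑ a : α, p a * Real.log (p a) + Real.log n) * Real.log 3 = 0 := by
      rw [show ∑ a : α, p a * Real.log (p a) + Real.log n = 0 by linarith [hH]]; ring
    rcases mul_eq_zero.mp h2 with h3 | h3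
    · linarith
    · exact absurd h3 hlog3.ne'
  have expand : ∀ a, p a * Real.log (n * p a) = p a * Real.log n + p a * Real.log (p a) := by
    intro a
    rcases eq_or_lt_of_le (hp0 a) with h | h
    · simp [← h]
    · rw [Real.log_mul hnpos.ne' h.ne']; ring
  have hsumlog : ∑ a : α, p a * Real.log (n * p a) = 0 := by
    rw [Finset.sum_congr rfl fun a _ => expand a, Finset.sum_add_distrib,
      ← Finset.sum_mul, hp1, hsum_plogp]
    ring
  have hTsum : ∑ a : α, (p a * Real.log (n * p a) - p a + 1 / n) = 0 := by
    rw [Finset.sum_add_distrib, Finset.sum_sub_distrib, hsumlog, hp1,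
      Finset.sum_const, Finset.card_univ, nsmul_eq_mul]
    rw [hn] at hnpos ⊢
    field_simp
    norm_num
  have hT0 : ∀ a ∈ Finset.univ, (0:ℝ) ≤ p a * Real.log (n * p a) - p a + 1 / n := by
    intro a _
    rcases eq_or_lt_of_le (hp0 a) with h | h
    · simp [← h]; positivity
    · have hx : (0:ℝ) < n * p a := by positivity
      have hinv := Real.log_le_sub_one_of_pos (show (0:ℝ) < (n * p a)⁻¹ by positivity)
      rw [Real.log_inv] at hinv
      have e1 : p a * (n * p a)⁻¹ = 1 / n := by field_simp
      nlinarith [mul_le_mul_of_nonneg_left hinv (hp0 a)]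
  have heach := (Finset.sum_eq_zero_iff_of_nonneg hT0).mp hTsum
  intro a
  have hTa := heach a (Finset.mem_univ a)
  rcases eq_or_lt_of_le (hp0 a) with h | h
  · exfalso
    rw [← h] at hTa
    simp at hTa
    rw [hTa] at hnpos
    simp at hnpos
  · by_contra hne
    have hx : (0:ℝ) < n * p a := by positivity
    have hx1 : n * p a ≠ 1 := by
      intro hh
      apply hne
      rw [eq_div_iff hnpos.ne']
      linarith [hh]
    have hinv := Real.log_lt_sub_one_of_pos (show (0:ℝ) < (n * p a)⁻¹ by positivity)
      (by simpa using (inv_eq_one (a := n * p a)).not.mpr hx1)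
    rw [Real.log_inv] at hinv
    have e1 : p a * (n * p a)⁻¹ = 1 / n := by field_simp
    nlinarith [mul_lt_mul_of_pos_left hinv h]

/-- If pushing forward along `g` loses no entropy, `g` is injective on the support. -/
lemma inj_of_entropy_sub_eq_zero {α β : Type*} [Fintype α] [Fintype β] [DecidableEq β]
    (p : α → ℝ) (hp0 : ∀ a, 0 ≤ p a) (g : α → β)
    (hH : -∑ a : α, p a * Real.logb 3 (p a)
        - -∑ b : β, (∑ a : α, if g a = b then p a else 0)
            * Real.logb 3 (∑ a : α, if g a = b then p a else 0) = 0) :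
    ∀ a a', p a ≠ 0 → p a' ≠ 0 → g a = g a' → a = a' := by
  set q : β → ℝ := fun b => ∑ a : α, if g a = b then p a else 0 with hq
  have hpq : ∀ a, p a ≤ q (g a) := by
    intro a
    have h1 := Finset.single_le_sum (f := fun a' => if g a' = g a then p a' else 0)
      (fun i _ => by split <;> simp [hp0 i]) (Finset.mem_univ a)
    simpa using h1
  have hgroup : ∑ b : β, q b * Real.logb 3 (q b)
      = ∑ a : α, p a * Real.logb 3 (q (g a)) := by
    rw [← Finset.sum_fiberwise Finset.univ g (fun a => p a * Real.logb 3 (q (g a)))]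
    refine Finset.sum_congr rfl fun b _ => ?_
    have h2 : ∑ a ∈ Finset.univ.filter (fun a => g a = b), p a * Real.logb 3 (q (g a))
        = ∑ a ∈ Finset.univ.filter (fun a => g a = b), p a * Real.logb 3 (q b) := by
      refine Finset.sum_congr rfl fun a ha => ?_
      rw [(Finset.mem_filter.mp ha).2]
    rw [h2, ← Finset.sum_mul]
    congr 1
    rw [hq]
    simp [Finset.sum_filter]
  have hterm : ∀ a ∈ Finset.univ, (0:ℝ) ≤ p a * (Real.logb 3 (q (g a)) - Real.logb 3 (p a)) := by
    intro a _
    rcases eq_or_lt_of_le (hp0 a) with h | h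
    · simp [← h]
    · have hqa : 0 < q (g a) := lt_of_lt_of_le h (hpq a)
      have := (Real.logb_le_logb (b := 3) (by norm_num) h hqa).mpr (hpq a)
      nlinarith
  have hsum : ∑ a : α, p a * (Real.logb 3 (q (g a)) - Real.logb 3 (p a)) = 0 := by
    have h3 : ∑ a : α, p a * (Real.logb 3 (q (g a)) - Real.logb 3 (p a))
        = ∑ a : α, p a * Real.logb 3 (q (g a)) - ∑ a : α, p a * Real.logb 3 (p a) := by
      rw [← Finset.sum_sub_distrib]
      exact Finset.sum_congr rfl fun a _ => by ring
    rw [h3, ← hgroup]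
    simp only [hq]
    linarith [hH]
  have heach := (Finset.sum_eq_zero_iff_of_nonneg hterm).mp hsum
  have hpeq : ∀ a, p a ≠ 0 → p a = q (g a) := by
    intro a ha
    have hpa : 0 < p a := lt_of_le_of_ne (hp0 a) (Ne.symm ha)
    have hqa : 0 < q (g a) := lt_of_lt_of_le hpa (hpq a)
    have h0 := heach a (Finset.mem_univ a)
    rcases mul_eq_zero.mp h0 with h1 | h1
    · exact absurd h1 ha
    · have h2 : Real.logb 3 (q (g a)) = Real.logb 3 (p a) := by linarith
      exact (Real.logb_injOn_pos (by norm_num) (Set.mem_Ioi.mpr hqa)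
        (Set.mem_Ioi.mpr hpa) h2).symm
  intro a a' ha ha' hg
  by_contra hne
  have hpa' : 0 < p a' := lt_of_le_of_ne (hp0 a') (Ne.symm ha')
  have hsum2 : p a + p a' ≤ q (g a) := by
    have hsub : ({a, a'} : Finset α) ⊆ Finset.univ := Finset.subset_univ _
    have h4 := Finset.sum_le_sum_of_subset_of_nonneg hsub
      (f := fun i => if g i = g a then p i else 0)
      (fun i _ _ => by split <;> simp [hp0 i])
    rw [Finset.sum_pair hne] at h4
    simpa [hg] using h4
  have := hpeq a ha
  linarith


/-- Let `X_1, X_2, X_3, X_7` be `F_3`-valued random variables (coordinates `0,1,2,3` of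
`μ`), each uniform, with `H(X_1,X_2,X_3) = 3`, `H(X_2,X_3,X_7) = 2`,
`H(X_7 | X_2,X_3) = 0` and `H(X_7 | X_1, X_1+X_2+X_3) = 0` (base-3 entropies). Then
`H(X_7 | X_2+X_3) = 0` and `H(X_2+X_3 | X_7) = 0`, i.e. `X_7` and `X_2 + X_3` determine
each other. -/
theorem fano_key_step (μ : PMF (Fin 4 → ZMod 3))
    (huniform : ∀ i : Fin 4, shannonEntropy 3 (μ.map fun x => x i) = 1)
    (h123 : shannonEntropy 3 (μ.map fun x => (x 0, x 1, x 2)) = 3)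
    (h237 : shannonEntropy 3 (μ.map fun x => (x 1, x 2, x 3)) = 2)
    (h7given23 : shannonEntropy 3 (μ.map fun x => (x 1, x 2, x 3)) -
      shannonEntropy 3 (μ.map fun x => (x 1, x 2)) = 0)
    (h7given1sum : shannonEntropy 3 (μ.map fun x => (x 0, x 0 + x 1 + x 2, x 3)) -
      shannonEntropy 3 (μ.map fun x => (x 0, x 0 + x 1 + x 2)) = 0) :
    shannonEntropy 3 (μ.map fun x => (x 1 + x 2, x 3)) -
      shannonEntropy 3 (μ.map fun x => x 1 + x 2) = 0 ∧
    shannonEntropy 3 (μ.map fun x => (x 1 + x 2, x 3)) -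
      shannonEntropy 3 (μ.map fun x => x 3) = 0 := by
  classical
  set P : (Fin 4 → ZMod 3) → ℝ := fun x => (μ x).toReal with hP
  have hP0 : ∀ x, 0 ≤ P x := fun x => ENNReal.toReal_nonneg
  have hPsum : ∑ x : Fin 4 → ZMod 3, P x = 1 := by
    have h1 := PMF.tsum_coe μ
    rw [tsum_fintype] at h1
    rw [hP, ← ENNReal.toReal_sum (fun a _ => PMF.apply_ne_top μ a), h1, ENNReal.toReal_one]
  -- entropy of a pushforward in terms of P
  have hmap : ∀ {β : Type} [Fintype β] [DecidableEq β] (f : (Fin 4 → ZMod 3) → β) (b : β),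
      ((μ.map f) b).toReal = ∑ x : Fin 4 → ZMod 3, if f x = b then P x else 0 := by
    intro β _ _ f b
    rw [PMF.map_apply, tsum_fintype,
      ENNReal.toReal_sum (fun a _ => by split <;> simp [PMF.apply_ne_top])]
    refine Finset.sum_congr rfl fun x _ => ?_
    by_cases h : f x = b
    · simp [h, hP]
    · simp [h, Ne.symm h]
  have hent : ∀ {β : Type} [Fintype β] [DecidableEq β] (f : (Fin 4 → ZMod 3) → β),
      shannonEntropy 3 (μ.map f)
        = -∑ b : β, (∑ x : Fin 4 → ZMod 3, if f x = b then P x else 0)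
            * Real.logb 3 (∑ x : Fin 4 → ZMod 3, if f x = b then P x else 0) := by
    intro β _ _ f
    simp only [shannonEntropy]
    congr 1
    exact Finset.sum_congr rfl fun b _ => by rw [hmap f b]
  -- nonnegativity of fiber masses and positivity on support
  have hQ0 : ∀ {β : Type} [Fintype β] [DecidableEq β] (f : (Fin 4 → ZMod 3) → β) (b : β),
      0 ≤ ∑ x : Fin 4 → ZMod 3, if f x = b then P x else 0 := by
    intro β _ _ f b
    exact Finset.sum_nonneg fun x _ => by split <;> simp [hP0 x]
  have hQge : ∀ {β : Type} [Fintype β] [DecidableEq β] (f : (Fin 4 → ZMod 3) → β)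
      (x : Fin 4 → ZMod 3),
      P x ≤ ∑ y : Fin 4 → ZMod 3, if f y = f x then P y else 0 := by
    intro β _ _ f x
    have h1 := Finset.single_le_sum (f := fun y => if f y = f x then P y else 0)
      (fun i _ => by show 0 ≤ if f i = f x then P i else 0; split <;> simp [hP0 i])
      (Finset.mem_univ x)
    simpa using h1
  have hQne : ∀ {β : Type} [Fintype β] [DecidableEq β] (f : (Fin 4 → ZMod 3) → β)
      (x : Fin 4 → ZMod 3), P x ≠ 0 →
      (∑ y : Fin 4 → ZMod 3, if f y = f x then P y else 0) ≠ 0 := by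
    intro β _ _ f x hx
    exact (lt_of_lt_of_le (lt_of_le_of_ne (hP0 x) (Ne.symm hx)) (hQge f x)).ne'
  -- rewrite all entropy hypotheses
  simp only [hent] at h123 h7given23 h7given1sum
  -- (X0,X1,X2) is uniform
  have hcard27 : Fintype.card (ZMod 3 × ZMod 3 × ZMod 3) = 27 := by simp
  have hU : ∀ t : ZMod 3 × ZMod 3 × ZMod 3,
      (∑ x : Fin 4 → ZMod 3, if (x 0, x 1, x 2) = t then P x else 0) = 1 / 27 := by
    have hmain := unif_of_max_entropy
      (p := fun t : ZMod 3 × ZMod 3 × ZMod 3 =>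
        ∑ x : Fin 4 → ZMod 3, if (x 0, x 1, x 2) = t then P x else 0)
      (fun t => hQ0 _ t)
      (by
        rw [Finset.sum_comm]
        simp only [Finset.sum_ite_eq, Finset.mem_univ, if_true]
        exact hPsum)
      (by rw [hcard27]; norm_num)
      (by
        rw [hcard27]
        have h27 : ((27 : ℕ) : ℝ) = (3 : ℝ) ^ (3 : ℕ) := by norm_num
        rw [h27, Real.logb_pow, Real.logb_self_eq_one (by norm_num)]
        push_cast
        rw [mul_one]
        exact h123)
    intro t
    have h5 := hmain t
    rw [hcard27] at h5
    rw [h5]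
    norm_num
  -- determinism of X3 given (X1, X2)
  have hdet23 : ∀ x y : Fin 4 → ZMod 3, P x ≠ 0 → P y ≠ 0 →
      x 1 = y 1 → x 2 = y 2 → x 3 = y 3 := by
    intro x y hx hy h1 h2
    have e3 : ∀ b : ZMod 3 × ZMod 3,
        (∑ t : ZMod 3 × ZMod 3 × ZMod 3, if (t.1, t.2.1) = b then
          (∑ x : Fin 4 → ZMod 3, if (x 1, x 2, x 3) = t then P x else 0) else 0)
        = ∑ x : Fin 4 → ZMod 3, if (x 1, x 2) = b then P x else 0 := fun b =>
      sum_ite_comp P (fun x => (x 1, x 2, x 3)) (fun t => (t.1, t.2.1)) b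
    have key := inj_of_entropy_sub_eq_zero
      (p := fun t : ZMod 3 × ZMod 3 × ZMod 3 =>
        ∑ x : Fin 4 → ZMod 3, if (x 1, x 2, x 3) = t then P x else 0)
      (fun t => hQ0 _ t) (g := fun t => (t.1, t.2.1))
      (by
        simp only [e3]
        exact h7given23)
      ((x 1, x 2, x 3)) ((y 1, y 2, y 3))
      (hQne (fun x => (x 1, x 2, x 3)) x hx) (hQne (fun x => (x 1, x 2, x 3)) y hy)
      (by simp [h1, h2])
    exact congrArg (fun t => t.2.2) key
  -- determinism of X3 given (X0, X0+X1+X2)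
  have hdet1s : ∀ x y : Fin 4 → ZMod 3, P x ≠ 0 → P y ≠ 0 →
      x 0 = y 0 → x 0 + x 1 + x 2 = y 0 + y 1 + y 2 → x 3 = y 3 := by
    intro x y hx hy h1 h2
    have e3 : ∀ b : ZMod 3 × ZMod 3,
        (∑ t : ZMod 3 × ZMod 3 × ZMod 3, if (t.1, t.2.1) = b then
          (∑ x : Fin 4 → ZMod 3, if (x 0, x 0 + x 1 + x 2, x 3) = t then P x else 0) else 0)
        = ∑ x : Fin 4 → ZMod 3, if (x 0, x 0 + x 1 + x 2) = b then P x else 0 := fun b =>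
      sum_ite_comp P (fun x => (x 0, x 0 + x 1 + x 2, x 3)) (fun t => (t.1, t.2.1)) b
    have key := inj_of_entropy_sub_eq_zero
      (p := fun t : ZMod 3 × ZMod 3 × ZMod 3 =>
        ∑ x : Fin 4 → ZMod 3, if (x 0, x 0 + x 1 + x 2, x 3) = t then P x else 0)
      (fun t => hQ0 _ t) (g := fun t => (t.1, t.2.1))
      (by
        simp only [e3]
        exact h7given1sum)
      ((x 0, x 0 + x 1 + x 2, x 3)) ((y 0, y 0 + y 1 + y 2, y 3))
      (hQne (fun x => (x 0, x 0 + x 1 + x 2, x 3)) x hx)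
      (hQne (fun x => (x 0, x 0 + x 1 + x 2, x 3)) y hy)
      (by show (x 0, x 0 + x 1 + x 2) = (y 0, y 0 + y 1 + y 2)
          rw [Prod.mk.injEq]; exact ⟨h1, h2⟩)
    exact congrArg (fun t => t.2.2) key
  -- every triple (a,b,c) occurs in the support
  have hex : ∀ a b c : ZMod 3, ∃ x : Fin 4 → ZMod 3,
      P x ≠ 0 ∧ x 0 = a ∧ x 1 = b ∧ x 2 = c := by
    intro a b c
    have h1 : (∑ x : Fin 4 → ZMod 3, if (x 0, x 1, x 2) = (a, b, c) then P x else 0) ≠ 0 := by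
      rw [hU (a, b, c)]; norm_num
    obtain ⟨x, -, hx⟩ := Finset.exists_ne_zero_of_sum_ne_zero h1
    by_cases h : (x 0, x 1, x 2) = (a, b, c)
    · rw [if_pos h] at hx
      exact ⟨x, hx, congrArg Prod.fst h, congrArg (fun p => p.2.1) h,
        congrArg (fun p => p.2.2) h⟩
    · rw [if_neg h] at hx; exact absurd rfl hx
  -- the function h with X3 = h (X1 + X2) on the support
  choose w hw0 hw1 hw2 hw3 using fun s => hex 0 s 0
  set h : ZMod 3 → ZMod 3 := fun s => w s 3 with hh
  have hKey : ∀ x : Fin 4 → ZMod 3, P x ≠ 0 → x 3 = h (x 1 + x 2) := by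
    intro x hx
    obtain ⟨z, hz, hz0, hz1, hz2⟩ := hex (x 0) (x 1 + x 2) 0
    have e1 : x 3 = z 3 := hdet1s x z hx hz hz0.symm (by rw [hz0, hz1, hz2]; ring)
    have e2 : z 3 = w (x 1 + x 2) 3 := hdet23 z (w (x 1 + x 2)) hz (hw0 _)
      (by rw [hz1, hw2]) (by rw [hz2, hw3])
    rw [e1, e2, hh]
  -- distribution of X1 + X2 is uniform
  have hQσ : ∀ s : ZMod 3,
      (∑ x : Fin 4 → ZMod 3, if x 1 + x 2 = s then P x else 0) = 1 / 3 := by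
    have hcount : ∀ s : ZMod 3, (Finset.univ.filter
        (fun t : ZMod 3 × ZMod 3 × ZMod 3 => t.2.1 + t.2.2 = s)).card = 9 := by decide
    intro s
    have e1 : (∑ x : Fin 4 → ZMod 3, if x 1 + x 2 = s then P x else 0)
        = ∑ t : ZMod 3 × ZMod 3 × ZMod 3, if t.2.1 + t.2.2 = s then
            (∑ x : Fin 4 → ZMod 3, if (x 0, x 1, x 2) = t then P x else 0) else 0 :=
      (sum_ite_comp P (fun x => (x 0, x 1, x 2)) (fun t => t.2.1 + t.2.2) s).symm
    rw [e1]
    simp only [hU]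
    rw [← Finset.sum_filter, Finset.sum_const, hcount s]
    norm_num
  -- distribution of the pair (X1+X2, X3)
  have hQpair : ∀ bc : ZMod 3 × ZMod 3,
      (∑ x : Fin 4 → ZMod 3, if (x 1 + x 2, x 3) = bc then P x else 0)
        = if bc.2 = h bc.1 then 1 / 3 else 0 := by
    rintro ⟨s, c⟩
    by_cases hc : c = h s
    · rw [if_pos hc, ← hQσ s]
      refine Finset.sum_congr rfl fun x _ => ?_
      by_cases hx : P x = 0
      · simp [hx]
      · by_cases hs : x 1 + x 2 = s
        · rw [if_pos (by rw [Prod.mk.injEq]; exact ⟨hs, by rw [hKey x hx, hs, ← hc]⟩),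
            if_pos hs]
        · rw [if_neg (by rw [Prod.mk.injEq]; exact fun hcon => hs hcon.1), if_neg hs]
    · rw [if_neg hc]
      refine Finset.sum_eq_zero fun x _ => ?_
      by_cases hx : P x = 0
      · simp [hx]
      · rw [if_neg]
        rw [Prod.mk.injEq]
        rintro ⟨h1, h2⟩
        exact hc (by rw [← h2, hKey x hx, h1])
  -- compute the two entropies
  have hlogb3 : Real.logb 3 (1 / 3 : ℝ) = -1 := by
    rw [one_div, Real.logb_inv, Real.logb_self_eq_one (by norm_num)]
  have Hpair : shannonEntropy 3 (μ.map fun x => (x 1 + x 2, x 3)) = 1 := by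
    rw [hent (fun x => (x 1 + x 2, x 3))]
    simp only [hQpair]
    have e2 : ∀ bc : ZMod 3 × ZMod 3,
        (if bc.2 = h bc.1 then (1/3 : ℝ) else 0)
            * Real.logb 3 (if bc.2 = h bc.1 then (1/3 : ℝ) else 0)
          = if bc.2 = h bc.1 then (1/3 : ℝ) * Real.logb 3 (1/3 : ℝ) else 0 := by
      intro bc; split <;> simp
    simp only [e2]
    rw [Fintype.sum_prod_type]
    simp only [Finset.sum_ite_eq', Finset.mem_univ, if_true]
    rw [Finset.sum_const, Finset.card_univ]
    simp [hlogb3]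
  have Hsigma : shannonEntropy 3 (μ.map fun x => x 1 + x 2) = 1 := by
    rw [hent (fun x => x 1 + x 2)]
    simp only [hQσ]
    rw [Finset.sum_const, Finset.card_univ]
    simp [hlogb3]
  constructor
  · rw [Hpair, Hsigma]; norm_num
  · rw [Hpair, huniform 3]; norm_num
end
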